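/- Let X be uniformly distributed over {0,1}ⁿ and f : {0,1}ⁿ → M_d⁺ a positive-semidefinite-matrix-valued function. For p ∈ (1,2) and Φ(u) = u^{2/p}, the matrix Φ-entropy satisfies H_Φ(f^p) ≤ (2−p)·E(f)·d^{1−2/p} + tr E[f²]·(1 − d^{1−2/p}), assuming the matrix Bonami–Beckner inequality (Σ_S (p−1)^{|S|}‖f̂(S)‖_{*p}²)^{1/2} ≤ (E‖f(X)‖_{*p}^p)^{1/p}. -/

import Mathlib

open Matrix Finset
open scoped ComplexOrder

/-- The normalized trace of a complex matrix, as a real number. -/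
noncomputable def trN {d : ℕ} (M : Matrix (Fin d) (Fin d) ℂ) : ℝ :=
  ((d : ℂ)⁻¹ * M.trace).re

/-- The matrix power `A^p` (a standard matrix function) of a positive semidefinite matrix. -/
noncomputable def mPow {d : ℕ} (A : Matrix (Fin d) (Fin d) ℂ) (p : ℝ) :
    Matrix (Fin d) (Fin d) ℂ :=
  cfc (fun x : ℝ => x ^ p) A

/-- The Fourier character `χ_S(x) = (−1)^{Σ_{i∈S} x_i}` on the Boolean hypercube. -/
noncomputable def chiS {n : ℕ} (S : Finset (Fin n)) (x : Fin n → Bool) : ℂ :=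
  (-1 : ℂ) ^ (∑ i ∈ S, if x i then 1 else 0 : ℕ)

/-- The matrix-valued Fourier coefficient `f̂(S) = 2^{−n} Σ_x f(x)·χ_S(x)`. -/
noncomputable def matFourierCoeff {n d : ℕ} (f : (Fin n → Bool) → Matrix (Fin d) (Fin d) ℂ)
    (S : Finset (Fin n)) : Matrix (Fin d) (Fin d) ℂ :=
  ((2 : ℂ) ^ n)⁻¹ • ∑ x : Fin n → Bool, chiS S x • f x

/-- The Dirichlet form `E(f) = (1/4)·Σᵢ tr E[(f(X) − f(X̄^{(i)}))²]` on the Boolean hypercube. -/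
noncomputable def dirichletForm {n d : ℕ} (f : (Fin n → Bool) → Matrix (Fin d) (Fin d) ℂ) : ℝ :=
  (1 / 4) * ∑ i : Fin n, ((2 : ℝ) ^ n)⁻¹ *
    ∑ x : Fin n → Bool, trN ((f x - f (Function.update x i (!(x i)))) ^ 2)

/-- The normalized Schatten `p`-norm `‖M‖_{*p} = ((1/d)·Tr|M|^p)^{1/p}`. -/
noncomputable def nSchatten {d : ℕ} (p : ℝ) (M : Matrix (Fin d) (Fin d) ℂ) : ℝ :=
  ((d : ℝ)⁻¹ * ∑ i,
      Real.sqrt ((Matrix.posSemidef_conjTranspose_mul_self M).1.eigenvalues i) ^ p) ^ (1 / p)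

/- ## trN basics -/

lemma trN_re_eq {d : ℕ} (M : Matrix (Fin d) (Fin d) ℂ) : trN M = (d : ℝ)⁻¹ * M.trace.re := by
  rw [trN, Complex.mul_re]
  simp

lemma trN_cfc {d : ℕ} (B : Matrix (Fin d) (Fin d) ℂ) (hB : B.IsHermitian) (g : ℝ → ℝ) :
    trN (cfc g B) = (d : ℝ)⁻¹ * ∑ i, g (hB.eigenvalues i) := by
  rw [hB.cfc_eq, Matrix.IsHermitian.cfc, Unitary.conjStarAlgAut_apply, trN,
    Matrix.trace_mul_cycle,
    show star (hB.eigenvectorUnitary : Matrix (Fin d) (Fin d) ℂ) *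
      (hB.eigenvectorUnitary : Matrix (Fin d) (Fin d) ℂ) = 1 from
    Unitary.coe_star_mul_self _, Matrix.one_mul, Matrix.trace_diagonal]
  simp only [Function.comp_apply]
  have h2 : ∀ y : ℝ, (RCLike.ofReal y : ℂ) = Complex.ofReal y := fun y => rfl
  simp only [h2]
  rw [← Complex.ofReal_sum, show ((d:ℂ))⁻¹ = ((d:ℝ)⁻¹ : ℂ) by push_cast; rfl,
    ← Complex.ofReal_inv, ← Complex.ofReal_mul, Complex.ofReal_re]

lemma trN_smul {d : ℕ} (c : ℝ) (M : Matrix (Fin d) (Fin d) ℂ) :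
    trN ((c : ℂ) • M) = c * trN M := by
  simp only [trN_re_eq, Matrix.trace_smul, Complex.real_smul, Complex.mul_re,
    Complex.ofReal_re, Complex.ofReal_im]
  ring_nf
  simp [Complex.smul_re]
  ring

lemma trN_sum {d : ℕ} {ι : Type*} (s : Finset ι) (g : ι → Matrix (Fin d) (Fin d) ℂ) :
    trN (∑ i ∈ s, g i) = ∑ i ∈ s, trN (g i) := by
  simp only [trN_re_eq, Matrix.trace_sum, Complex.re_sum, Finset.mul_sum]

lemma trN_nonneg {d : ℕ} {M : Matrix (Fin d) (Fin d) ℂ} (hM : M.PosSemidef) : 0 ≤ trN M := by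
  rw [trN_re_eq]
  refine mul_nonneg (by positivity) ?_
  rw [Matrix.trace, Complex.re_sum]
  refine Finset.sum_nonneg fun i _ => ?_
  have := (Matrix.posSemidef_iff_dotProduct_mulVec.mp hM).2 (Pi.single i 1)
  have h0 : star (Pi.single i 1) ⬝ᵥ (M *ᵥ Pi.single i 1) = M i i := by
    simp [Matrix.mulVec_single, dotProduct, Pi.single_apply, Matrix.diag]
  rw [h0] at this
  exact (Complex.le_def.mp this).1

lemma trN_sq_nonneg {d : ℕ} {M : Matrix (Fin d) (Fin d) ℂ} (hM : M.IsHermitian) :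
    0 ≤ trN (M ^ 2) := by
  have : M ^ 2 = Mᴴ * M := by rw [hM.eq, pow_two]
  rw [this]
  exact trN_nonneg (Matrix.posSemidef_conjTranspose_mul_self M)

/- ## PSD facts -/

lemma psd_smul {d : ℕ} {M : Matrix (Fin d) (Fin d) ℂ} (hM : M.PosSemidef) {r : ℝ} (hr : 0 ≤ r) :
    (((r : ℝ) : ℂ) • M).PosSemidef := by
  rw [Matrix.posSemidef_iff_dotProduct_mulVec]
  constructor
  · rw [Matrix.IsHermitian, Matrix.conjTranspose_smul, hM.1.eq]
    congr 1
    simp [Complex.ext_iff]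
  · intro x
    have h := (Matrix.posSemidef_iff_dotProduct_mulVec.mp hM).2 x
    have : star x ⬝ᵥ (((r : ℂ) • M) *ᵥ x) = (r : ℂ) * (star x ⬝ᵥ (M *ᵥ x)) := by
      simp [Matrix.smul_mulVec, dotProduct_smul]
    rw [this]
    rw [Complex.le_def] at h ⊢
    constructor
    · simp only [Complex.mul_re, Complex.ofReal_re, Complex.ofReal_im, Complex.zero_re] at h ⊢
      nlinarith [h.1]
    · simp only [Complex.mul_im, Complex.ofReal_re, Complex.ofReal_im, Complex.zero_im] at h ⊢
      simp [← h.2]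

lemma psd_cfc {d : ℕ} {B : Matrix (Fin d) (Fin d) ℂ} (hB : B.IsHermitian) (g : ℝ → ℝ)
    (hg : ∀ i, 0 ≤ g (hB.eigenvalues i)) : (cfc g B).PosSemidef := by
  rw [hB.cfc_eq, Matrix.IsHermitian.cfc]
  have hD : (Matrix.diagonal (RCLike.ofReal ∘ g ∘ hB.eigenvalues) :
      Matrix (Fin d) (Fin d) ℂ).PosSemidef := by
    refine Matrix.PosSemidef.diagonal fun i => ?_
    simp only [Function.comp_apply]
    rw [Complex.le_def]
    constructor
    · simpa using hg i
    · simp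
  simpa [Matrix.star_eq_conjTranspose] using hD.mul_mul_conjTranspose_same (hB.eigenvectorUnitary : Matrix (Fin d) (Fin d) ℂ)

/- ## characters -/

lemma chi_mul {n : ℕ} (S : Finset (Fin n)) (x y : Fin n → Bool) :
    chiS S x * chiS S y = ∏ i ∈ S, (if x i = y i then (1:ℂ) else -1) := by
  rw [chiS, chiS, ← pow_add, ← Finset.sum_add_distrib, ← Finset.prod_pow_eq_pow_sum]
  refine Finset.prod_congr rfl fun i _ => ?_
  cases hx : x i <;> cases hy : y i <;> norm_num

lemma chi_orth {n : ℕ} (x y : Fin n → Bool) :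
    ∑ S : Finset (Fin n), chiS S x * chiS S y = if x = y then (2:ℂ)^n else 0 := by
  simp only [chi_mul]
  have h := Finset.prod_add (fun i => (if x i = y i then (1:ℂ) else -1)) (fun _ => (1:ℂ))
    Finset.univ
  simp only [Finset.prod_const_one, mul_one, Finset.powerset_univ] at h
  rw [← h]
  by_cases hxy : x = y
  · subst hxy
    simp [Finset.prod_const]
    norm_num
  · obtain ⟨j, hj⟩ := Function.ne_iff.mp hxy
    rw [if_neg hxy]
    exact Finset.prod_eq_zero (Finset.mem_univ j) (by simp [hj])

lemma parseval {n d : ℕ} (f : (Fin n → Bool) → Matrix (Fin d) (Fin d) ℂ) :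
    ∑ S : Finset (Fin n), (matFourierCoeff f S) ^ 2
      = ((2:ℂ)^n)⁻¹ • ∑ x : Fin n → Bool, (f x) ^ 2 := by
  have key : ∀ S : Finset (Fin n), (matFourierCoeff f S) ^ 2
      = (((2:ℂ)^n)⁻¹ * ((2:ℂ)^n)⁻¹) •
        ∑ x : Fin n → Bool, ∑ y : Fin n → Bool, (chiS S x * chiS S y) • (f x * f y) := by
    intro S
    rw [matFourierCoeff, pow_two, Matrix.smul_mul, Matrix.mul_smul, smul_smul,
      Finset.sum_mul_sum]
    congr 1
    refine Finset.sum_congr rfl fun x _ => Finset.sum_congr rfl fun y _ => ?_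
    rw [Matrix.smul_mul, Matrix.mul_smul, smul_smul]
  rw [Finset.sum_congr rfl fun S _ => key S, ← Finset.smul_sum, Finset.sum_comm]
  have h2 : ∀ x : Fin n → Bool,
      ∑ S : Finset (Fin n), ∑ y : Fin n → Bool, (chiS S x * chiS S y) • (f x * f y)
        = ((2:ℂ)^n) • (f x ^ 2) := by
    intro x
    rw [Finset.sum_comm]
    have h3 : ∀ y : Fin n → Bool,
        ∑ S : Finset (Fin n), (chiS S x * chiS S y) • (f x * f y)
          = (if x = y then (2:ℂ)^n else 0) • (f x * f y) := by
      intro y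
      rw [← Finset.sum_smul, chi_orth]
    rw [Finset.sum_congr rfl fun y _ => h3 y, Finset.sum_eq_single x]
    · simp [pow_two]
    · intro y _ hyx
      rw [if_neg (Ne.symm hyx), zero_smul]
    · intro h; exact absurd (Finset.mem_univ x) h
  rw [Finset.sum_congr rfl fun x _ => h2 x, ← Finset.smul_sum, smul_smul]
  congr 1
  have h4 : ((2:ℂ)^n) ≠ 0 := by positivity
  field_simp

/- ## flips -/

/-- The flip involution. -/
def flipE {n : ℕ} (i : Fin n) : (Fin n → Bool) ≃ (Fin n → Bool) where
  toFun x := Function.update x i (!(x i))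
  invFun x := Function.update x i (!(x i))
  left_inv x := by
    ext j
    by_cases hj : j = i
    · subst hj; simp
    · simp [Function.update_apply, hj]
  right_inv x := by
    ext j
    by_cases hj : j = i
    · subst hj; simp
    · simp [Function.update_apply, hj]

lemma chi_sq {n : ℕ} (S : Finset (Fin n)) (y : Fin n → Bool) : chiS S y * chiS S y = 1 := by
  rw [chi_mul]
  exact Finset.prod_eq_one fun i _ => by simp

lemma chi_flip {n : ℕ} (S : Finset (Fin n)) (i : Fin n) (y : Fin n → Bool) :
    chiS S (flipE i y) = (if i ∈ S then (-1:ℂ) else 1) * chiS S y := by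
  have h1 : chiS S (flipE i y) * chiS S y = (if i ∈ S then (-1:ℂ) else 1) := by
    rw [chi_mul]
    have : ∀ j ∈ S, (if (flipE i y) j = y j then (1:ℂ) else -1)
        = (if j = i then (-1:ℂ) else 1) := by
      intro j _
      by_cases hj : j = i
      · subst hj; simp [flipE]
      · simp [flipE, Function.update_apply, hj]
    rw [Finset.prod_congr rfl this, Finset.prod_ite_eq' S i (fun _ => (-1:ℂ))]
  calc chiS S (flipE i y) = chiS S (flipE i y) * (chiS S y * chiS S y) := by
        rw [chi_sq, mul_one]
    _ = (chiS S (flipE i y) * chiS S y) * chiS S y := by ring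
    _ = _ := by rw [h1]

lemma fourier_flip {n d : ℕ} (f : (Fin n → Bool) → Matrix (Fin d) (Fin d) ℂ) (i : Fin n)
    (S : Finset (Fin n)) :
    matFourierCoeff (fun x => f (Function.update x i (!(x i)))) S
      = (if i ∈ S then (-1:ℂ) else 1) • matFourierCoeff f S := by
  rw [matFourierCoeff, matFourierCoeff, smul_comm]
  congr 1
  rw [Finset.smul_sum]
  rw [← Equiv.sum_comp (flipE i) (fun x => chiS S x • f (Function.update x i (!(x i))))]
  refine Finset.sum_congr rfl fun y _ => ?_
  have hfy : Function.update (flipE i y) i (!((flipE i y) i)) = y := (flipE i).left_inv y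
  rw [hfy, chi_flip, smul_smul]

lemma fourier_sub_flip {n d : ℕ} (f : (Fin n → Bool) → Matrix (Fin d) (Fin d) ℂ) (i : Fin n)
    (S : Finset (Fin n)) :
    matFourierCoeff (fun x => f x - f (Function.update x i (!(x i)))) S
      = (if i ∈ S then (2:ℂ) else 0) • matFourierCoeff f S := by
  have hlin : matFourierCoeff (fun x => f x - f (Function.update x i (!(x i)))) S
      = matFourierCoeff f S - matFourierCoeff (fun x => f (Function.update x i (!(x i)))) S := by
    rw [matFourierCoeff, matFourierCoeff, matFourierCoeff, ← smul_sub, ← Finset.sum_sub_distrib]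
    congr 1
    congr 1
    exact funext fun x => (smul_sub _ _ _)
  rw [hlin, fourier_flip]
  by_cases hi : i ∈ S
  · simp only [if_pos hi]
    rw [show (2:ℂ) = 1 - (-1) by norm_num, sub_smul, one_smul]
  · simp only [if_neg hi, one_smul, sub_self, zero_smul]

/- ## Parseval corollaries -/

lemma trN_parseval {n d : ℕ} (g : (Fin n → Bool) → Matrix (Fin d) (Fin d) ℂ) :
    ((2:ℝ)^n)⁻¹ * ∑ x : Fin n → Bool, trN (g x ^ 2)
      = ∑ S : Finset (Fin n), trN ((matFourierCoeff g S) ^ 2) := by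
  have h := congrArg trN (parseval g)
  rw [trN_sum, show ((2:ℂ)^n)⁻¹ = ((((2:ℝ)^n)⁻¹ : ℝ) : ℂ) by push_cast; rfl, trN_smul,
    trN_sum] at h
  exact h.symm

lemma dirichlet_eq {n d : ℕ} (f : (Fin n → Bool) → Matrix (Fin d) (Fin d) ℂ) :
    dirichletForm f
      = ∑ S : Finset (Fin n), (S.card : ℝ) * trN ((matFourierCoeff f S) ^ 2) := by
  rw [dirichletForm]
  have key : ∀ i : Fin n,
      ((2:ℝ)^n)⁻¹ * ∑ x : Fin n → Bool, trN ((f x - f (Function.update x i (!(x i))))^2)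
      = ∑ S : Finset (Fin n), (if i ∈ S then (4:ℝ) else 0) * trN ((matFourierCoeff f S)^2) := by
    intro i
    rw [trN_parseval (fun x => f x - f (Function.update x i (!(x i))))]
    refine Finset.sum_congr rfl fun S _ => ?_
    rw [fourier_sub_flip, smul_pow]
    by_cases hi : i ∈ S
    · rw [if_pos hi, if_pos hi, show ((2:ℂ))^2 = (((4:ℝ):ℂ)) by norm_num, trN_smul]
    · rw [if_neg hi, if_neg hi]
      norm_num
      simp [trN]
  rw [Finset.sum_congr rfl fun i _ => key i, Finset.sum_comm, Finset.mul_sum]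
  refine Finset.sum_congr rfl fun S _ => ?_
  rw [← Finset.sum_mul, Finset.sum_ite_mem, Finset.univ_inter, Finset.sum_const]
  ring

/- ## scalar inequalities -/

lemma sum_rpow_le {ι : Type*} (s : Finset ι) (b : ι → ℝ) (hb : ∀ i ∈ s, 0 ≤ b i)
    {q : ℝ} (hq : 1 ≤ q) : ∑ i ∈ s, b i ^ q ≤ (∑ i ∈ s, b i) ^ q := by
  by_cases h0 : ∑ i ∈ s, b i = 0
  · have hz : ∀ i ∈ s, b i = 0 := (Finset.sum_eq_zero_iff_of_nonneg hb).mp h0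
    rw [h0, Real.zero_rpow (by linarith : q ≠ 0),
      Finset.sum_congr rfl fun i hi => by
        rw [hz i hi, Real.zero_rpow (by linarith : q ≠ 0)]]
    simp
  · have hpos : 0 < ∑ i ∈ s, b i := lt_of_le_of_ne (Finset.sum_nonneg hb) (Ne.symm h0)
    calc ∑ i ∈ s, b i ^ q ≤ ∑ i ∈ s, b i * (∑ j ∈ s, b j) ^ (q - 1) := by
          refine Finset.sum_le_sum fun i hi => ?_
          rcases eq_or_lt_of_le (hb i hi) with h | h
          · rw [← h, Real.zero_rpow (by linarith : q ≠ 0), zero_mul]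
          · have hbi : b i ^ q = b i ^ (1:ℝ) * b i ^ (q - 1) := by
              rw [← Real.rpow_add h]
              congr 1
              ring
            rw [hbi, Real.rpow_one]
            refine mul_le_mul_of_nonneg_left ?_ (le_of_lt h)
            exact Real.rpow_le_rpow (le_of_lt h)
              (Finset.single_le_sum hb hi) (by linarith)
    _ = (∑ i ∈ s, b i) ^ q := by
          rw [← Finset.sum_mul]
          nth_rewrite 1 [← Real.rpow_one (∑ i ∈ s, b i)]
          rw [← Real.rpow_add hpos]
          congr 1
          ring

/- ## Schatten norm via eigenvalues -/

lemma nSchatten_eq {d : ℕ} (hd : 0 < d) {M : Matrix (Fin d) (Fin d) ℂ} (hM : M.IsHermitian)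
    {p : ℝ} (hp : 0 < p) :
    nSchatten p M = ((d : ℝ)⁻¹ * ∑ i, |hM.eigenvalues i| ^ p) ^ (1 / p) := by
  rw [nSchatten]
  congr 2
  set g : ℝ → ℝ := fun x => Real.sqrt x ^ p with hg
  have hMH : (Mᴴ * M).IsHermitian := (Matrix.posSemidef_conjTranspose_mul_self M).1
  have h1 : trN (cfc g (Mᴴ * M)) = (d:ℝ)⁻¹ * ∑ i, g (hMH.eigenvalues i) := trN_cfc _ hMH g
  have hsq : Mᴴ * M = M ^ 2 := by rw [hM.eq, pow_two]
  have hsa : IsSelfAdjoint M := hM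
  have hcont : ContinuousOn g ((· ^ 2) '' spectrum ℝ M) :=
    Set.Finite.continuousOn ((Matrix.finite_real_spectrum (A := M)).image _) _
  have h2 : cfc (fun x : ℝ => g (x ^ 2)) M = cfc g (M ^ 2) := cfc_comp_pow g 2 M hcont hsa
  have h3 : trN (cfc (fun x : ℝ => g (x^2)) M) = (d:ℝ)⁻¹ * ∑ i, g ((hM.eigenvalues i)^2) :=
    trN_cfc _ hM _
  have h4 : (d:ℝ)⁻¹ * ∑ i, g (hMH.eigenvalues i)
      = (d:ℝ)⁻¹ * ∑ i, g ((hM.eigenvalues i)^2) := by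
    rw [← h1, ← h3, h2, hsq]
  have hd' : ((d:ℝ)⁻¹ : ℝ) ≠ 0 := by positivity
  have h5 := mul_left_cancel₀ hd' h4
  have goal_eq : ∑ i, Real.sqrt
        ((Matrix.posSemidef_conjTranspose_mul_self M).1.eigenvalues i) ^ p
      = ∑ i, g (hMH.eigenvalues i) := rfl
  rw [goal_eq, h5]
  refine Finset.sum_congr rfl fun i _ => ?_
  simp only [hg, Real.sqrt_sq_eq_abs]

lemma schatten_pow_p {d : ℕ} (hd : 0 < d) {A : Matrix (Fin d) (Fin d) ℂ} (hA : A.PosSemidef)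
    {p : ℝ} (hp : 0 < p) : nSchatten p A ^ p = trN (mPow A p) := by
  rw [nSchatten_eq hd hA.1 hp]
  have hbase : (0:ℝ) ≤ (d : ℝ)⁻¹ * ∑ i, |hA.1.eigenvalues i| ^ p := by
    refine mul_nonneg (by positivity) (Finset.sum_nonneg fun i _ => ?_)
    exact Real.rpow_nonneg (abs_nonneg _) p
  rw [← Real.rpow_mul hbase, one_div, inv_mul_cancel₀ (ne_of_gt hp), Real.rpow_one,
    mPow, trN_cfc _ hA.1]
  congr 1
  refine Finset.sum_congr rfl fun i _ => ?_
  rw [abs_of_nonneg (hA.eigenvalues_nonneg i)]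

lemma nSchatten_nonneg {d : ℕ} (p : ℝ) (M : Matrix (Fin d) (Fin d) ℂ) : 0 ≤ nSchatten p M :=
  Real.rpow_nonneg (mul_nonneg (by positivity) (Finset.sum_nonneg fun i _ =>
    Real.rpow_nonneg (Real.sqrt_nonneg _) _)) _

lemma sum_sq_le {d : ℕ} (a : Fin d → ℝ) {p : ℝ} (hp1 : 1 < p) (hp2 : p < 2) :
    ∑ i, (a i) ^ (2:ℕ) ≤ (∑ i, |a i| ^ p) ^ ((2:ℝ)/p) := by
  have hp0 : (0:ℝ) < p := by linarith
  have key : ∀ i, (a i) ^ (2:ℕ) = (|a i| ^ p) ^ ((2:ℝ)/p) := by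
    intro i
    rw [← Real.rpow_mul (abs_nonneg _)]
    have hpp : p * (2/p) = 2 := by field_simp
    rw [hpp, show ((2:ℝ)) = ((2:ℕ):ℝ) by norm_num, Real.rpow_natCast, sq_abs]
  rw [Finset.sum_congr rfl fun i _ => key i]
  exact sum_rpow_le Finset.univ _ (fun i _ => Real.rpow_nonneg (abs_nonneg _) _)
    ((one_le_div hp0).mpr (by linarith))

lemma schatten_sq_ge {d : ℕ} (hd : 0 < d) {M : Matrix (Fin d) (Fin d) ℂ} (hM : M.IsHermitian)
    {p : ℝ} (hp1 : 1 < p) (hp2 : p < 2) :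
    (d : ℝ) ^ (1 - 2/p) * trN (M ^ 2) ≤ nSchatten p M ^ (2:ℝ) := by
  have hp0 : (0:ℝ) < p := by linarith
  have hdp : (0:ℝ) < d := by exact_mod_cast hd
  rw [nSchatten_eq hd hM hp0]
  have hsum : (0:ℝ) ≤ ∑ i, |hM.eigenvalues i| ^ p :=
    Finset.sum_nonneg fun i _ => Real.rpow_nonneg (abs_nonneg _) _
  have hbase : (0:ℝ) ≤ (d:ℝ)⁻¹ * ∑ i, |hM.eigenvalues i| ^ p :=
    mul_nonneg (by positivity) hsum
  rw [← Real.rpow_mul hbase, show (1/p * 2 : ℝ) = 2/p by ring]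
  have hM2 : trN (M ^ 2) = (d:ℝ)⁻¹ * ∑ i, (hM.eigenvalues i) ^ (2:ℕ) := by
    rw [← cfc_pow_id (R := ℝ) M 2 hM]
    exact trN_cfc M hM _
  rw [hM2, Real.mul_rpow (by positivity) hsum]
  have e1 : (d:ℝ) ^ (1 - 2/p) * (d:ℝ)⁻¹ = ((d:ℝ)⁻¹) ^ ((2:ℝ)/p) := by
    rw [show ((d:ℝ))⁻¹ = (d:ℝ) ^ (-1:ℝ) from (Real.rpow_neg_one _).symm,
      ← Real.rpow_add hdp, ← Real.rpow_mul (le_of_lt hdp)]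
    congr 1
    ring
  calc (d:ℝ) ^ (1 - 2/p) * ((d:ℝ)⁻¹ * ∑ i, (hM.eigenvalues i) ^ (2:ℕ))
      = ((d:ℝ)⁻¹) ^ ((2:ℝ)/p) * ∑ i, (hM.eigenvalues i) ^ (2:ℕ) := by
        rw [← mul_assoc, e1]
    _ ≤ ((d:ℝ)⁻¹) ^ ((2:ℝ)/p) * (∑ i, |hM.eigenvalues i| ^ p) ^ ((2:ℝ)/p) :=
        mul_le_mul_of_nonneg_left (sum_sq_le _ hp1 hp2) (Real.rpow_nonneg (by positivity) _)

lemma trN_mPow_ge {d : ℕ} (hd : 0 < d) {E : Matrix (Fin d) (Fin d) ℂ} (hE : E.PosSemidef)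
    {q : ℝ} (hq : 1 ≤ q) : (trN E) ^ q ≤ trN (mPow E q) := by
  have hid : trN E = (d:ℝ)⁻¹ * ∑ i, hE.1.eigenvalues i := by
    conv_lhs => rw [← cfc_id' (R := ℝ) E hE.1]
    exact trN_cfc E hE.1 _
  have heq : trN (cfc (fun x : ℝ => x ^ q) E) = (d:ℝ)⁻¹ * ∑ i, hE.1.eigenvalues i ^ q :=
    trN_cfc E hE.1 _
  rw [hid, mPow, heq]
  have := Real.rpow_arith_mean_le_arith_mean_rpow Finset.univ (fun _ => (d:ℝ)⁻¹)
    (fun i => hE.1.eigenvalues i) (fun _ _ => by positivity)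
    (by
      rw [Finset.sum_const, Finset.card_univ, Fintype.card_fin, nsmul_eq_mul]
      field_simp)
    (fun i _ => hE.eigenvalues_nonneg i) hq
  simpa [Finset.mul_sum] using this

lemma fourier_herm {n d : ℕ} (f : (Fin n → Bool) → Matrix (Fin d) (Fin d) ℂ)
    (hf : ∀ x, (f x).IsHermitian) (S : Finset (Fin n)) :
    (matFourierCoeff f S).IsHermitian := by
  rw [matFourierCoeff, Matrix.IsHermitian, Matrix.conjTranspose_smul, Matrix.conjTranspose_sum]
  have h1 : star ((2:ℂ)^n)⁻¹ = ((2:ℂ)^n)⁻¹ := by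
    rw [star_inv₀, star_pow]
    norm_num
  have h2 : ∀ x, (chiS S x • f x)ᴴ = chiS S x • f x := by
    intro x
    rw [Matrix.conjTranspose_smul, (hf x).eq, chiS, star_pow, star_neg, star_one]
  rw [h1]
  congr 1
  exact Finset.sum_congr rfl fun x _ => h2 x

lemma psd_sum {d : ℕ} {ι : Type*} (s : Finset ι) (g : ι → Matrix (Fin d) (Fin d) ℂ)
    (hg : ∀ i ∈ s, (g i).PosSemidef) : (∑ i ∈ s, g i).PosSemidef :=
  Finset.sum_induction g _ (fun _ _ ha hb => ha.add hb) Matrix.PosSemidef.zero hg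

/-- **Matrix `Φ`-Sobolev inequality for symmetric Bernoulli random variables.**
Let `X` be uniform on `{0,1}ⁿ` and `f : {0,1}ⁿ → M_d⁺` a positive-semidefinite-matrix-valued
function.  For `p ∈ (1,2)` and `Φ(u) = u^{2/p}`, assuming the matrix Bonami–Beckner inequality,
`H_Φ(f^p) ≤ (2−p)·E(f)·d^{1−2/p} + tr E[f²]·(1 − d^{1−2/p})`.  Here
`H_Φ(f^p) = tr E[f²] − tr (E[f^p])^{2/p}`. -/
theorem matrix_phi_sobolev_bernoulli {n d : ℕ} (hd : 0 < d)
    (f : (Fin n → Bool) → Matrix (Fin d) (Fin d) ℂ)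
    (hf : ∀ x, (f x).PosSemidef)
    (p : ℝ) (hp1 : 1 < p) (hp2 : p < 2)
    -- the matrix Bonami–Beckner inequality, taken as a hypothesis:
    (hBB : (∑ S : Finset (Fin n), (p - 1) ^ S.card * nSchatten p (matFourierCoeff f S) ^ (2 : ℝ))
        ^ ((1 : ℝ) / 2) ≤
      (((2 : ℝ) ^ n)⁻¹ * ∑ x : Fin n → Bool, nSchatten p (f x) ^ p) ^ (1 / p)) :
    (((2 : ℝ) ^ n)⁻¹ * ∑ x : Fin n → Bool, trN (f x ^ 2)) -
        trN (mPow (((2 : ℂ) ^ n)⁻¹ • ∑ x : Fin n → Bool, mPow (f x) p) (2 / p)) ≤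
      (2 - p) * dirichletForm f * (d : ℝ) ^ (1 - 2 / p) +
        (((2 : ℝ) ^ n)⁻¹ * ∑ x : Fin n → Bool, trN (f x ^ 2)) *
          (1 - (d : ℝ) ^ (1 - 2 / p)) := by
  have hp0 : (0:ℝ) < p := by linarith
  have hdp : (0:ℝ) < d := by exact_mod_cast hd
  set κ : ℝ := (d : ℝ) ^ (1 - 2 / p) with hκ
  have hκ0 : 0 ≤ κ := Real.rpow_nonneg (le_of_lt hdp) _
  set A : ℝ := ((2:ℝ)^n)⁻¹ * ∑ x : Fin n → Bool, trN (f x ^ 2) with hA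
  set Em : Matrix (Fin d) (Fin d) ℂ :=
    ((2 : ℂ) ^ n)⁻¹ • ∑ x : Fin n → Bool, mPow (f x) p with hEm
  have hcast : ((2:ℂ)^n)⁻¹ = ((((2:ℝ)^n)⁻¹ : ℝ) : ℂ) := by push_cast; rfl
  have hEpsd : Em.PosSemidef := by
    rw [hEm, hcast]
    refine psd_smul (psd_sum _ _ fun x _ => ?_) (by positivity)
    exact psd_cfc (hf x).1 _ (fun i => Real.rpow_nonneg ((hf x).eigenvalues_nonneg i) _)
  set B : ℝ := trN (mPow Em (2/p)) with hB
  set t : Finset (Fin n) → ℝ := fun S => trN ((matFourierCoeff f S) ^ 2) with ht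
  have htnn : ∀ S, 0 ≤ t S := fun S => trN_sq_nonneg (fourier_herm f (fun x => (hf x).1) S)
  have hApar : A = ∑ S : Finset (Fin n), t S := trN_parseval f
  have hDir : dirichletForm f = ∑ S : Finset (Fin n), (S.card : ℝ) * t S := dirichlet_eq f
  have h3 : A - (2 - p) * dirichletForm f ≤ ∑ S : Finset (Fin n), (p-1)^S.card * t S := by
    rw [hApar, hDir, Finset.mul_sum, ← Finset.sum_sub_distrib]
    refine Finset.sum_le_sum fun S _ => ?_
    have hbern : 1 + (S.card : ℝ) * (p - 2) ≤ (p-1)^S.card := by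
      have hb := one_add_mul_le_pow (show (-2:ℝ) ≤ p - 2 by linarith) S.card
      have h' : (1 + (p-2)) = p - 1 := by ring
      rwa [h'] at hb
    have hre : t S - (2-p) * ((S.card:ℝ) * t S) = (1 + (S.card:ℝ)*(p-2)) * t S := by ring
    rw [hre]
    exact mul_le_mul_of_nonneg_right hbern (htnn S)
  have h4 : κ * ∑ S : Finset (Fin n), (p-1)^S.card * t S
      ≤ ∑ S : Finset (Fin n), (p-1)^S.card * nSchatten p (matFourierCoeff f S) ^ (2:ℝ) := by
    rw [Finset.mul_sum]
    refine Finset.sum_le_sum fun S _ => ?_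
    have hs := schatten_sq_ge hd (fourier_herm f (fun x => (hf x).1) S) hp1 hp2
    calc κ * ((p-1)^S.card * t S) = (p-1)^S.card * (κ * t S) := by ring
      _ ≤ (p-1)^S.card * nSchatten p (matFourierCoeff f S) ^ (2:ℝ) :=
          mul_le_mul_of_nonneg_left hs (pow_nonneg (by linarith) _)
  set L : ℝ := ∑ S : Finset (Fin n), (p-1)^S.card * nSchatten p (matFourierCoeff f S) ^ (2:ℝ)
    with hL
  have hLnn : 0 ≤ L := Finset.sum_nonneg fun S _ => mul_nonneg (pow_nonneg (by linarith) _)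
    (Real.rpow_nonneg (nSchatten_nonneg _ _) _)
  have htrEm : trN Em = ((2:ℝ)^n)⁻¹ * ∑ x : Fin n → Bool, nSchatten p (f x) ^ p := by
    rw [hEm, hcast, trN_smul, trN_sum]
    congr 1
    exact Finset.sum_congr rfl fun x _ => (schatten_pow_p hd (hf x) hp0).symm
  have hEnn : 0 ≤ trN Em := trN_nonneg hEpsd
  have h5 : L ≤ (trN Em) ^ ((2:ℝ)/p) := by
    have hhb : L ^ ((1:ℝ)/2) ≤ (trN Em) ^ ((1:ℝ)/p) := by
      rw [htrEm]
      exact hBB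
    have hsq := mul_self_le_mul_self (Real.rpow_nonneg hLnn _) hhb
    have e1 : L ^ ((1:ℝ)/2) * L ^ ((1:ℝ)/2) = L := by
      rw [← Real.rpow_add' hLnn (by norm_num)]
      norm_num
    have e2 : (trN Em) ^ ((1:ℝ)/p) * (trN Em) ^ ((1:ℝ)/p) = (trN Em) ^ ((2:ℝ)/p) := by
      rw [← Real.rpow_add' hEnn (by positivity)]
      congr 1
      ring
    rw [e1, e2] at hsq
    exact hsq
  have h7 : (trN Em) ^ ((2:ℝ)/p) ≤ B :=
    trN_mPow_ge hd hEpsd ((one_le_div hp0).mpr (by linarith))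
  have hchain : κ * (A - (2 - p) * dirichletForm f) ≤ B :=
    le_trans (mul_le_mul_of_nonneg_left h3 hκ0) (le_trans h4 (le_trans h5 h7))
  nlinarith [hchain]
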